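/- arXiv:1709.02468 — 4 statements merged into one kernel-verified Lean document; each statement's English description precedes it below -/
import Mathlib

section
/- Discrete integration by parts for the divergence/gradient pair: for any discrete normal vector field u : E → ℝ and any discrete cell field ψ : C → ℝ, one has (u, ∇_h ψ)_{0,h} = −(1/2) (∇_h·u, ψ)_{0,h}; explicitly, Σ_{e∈E} u_e · ( −(1/d_e) Σ_{i∈C} ψ_i n_{e,i} ) · ( (1/2) d_e l_e ) = −(1/2) Σ_{i∈C} ( (1/A_i) Σ_{e∈E} u_e l_e n_{e,i} ) · ψ_i · A_i, provided d_e ≠ 0 for every edge e and A_i ≠ 0 for every cell i. -/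
open Finset

/-- Discrete integration by parts for the divergence/gradient pair on an
unstructured primal-dual mesh: `(u, ∇_h ψ)_{0,h} = -(1/2) (∇_h·u, ψ)_{0,h}`. -/
theorem discrete_integration_by_parts_div_grad
    {C E : Type*} [Fintype C] [Fintype E]
    (d l : E → ℝ) (A : C → ℝ) (n : E → C → ℝ)
    (u : E → ℝ) (ψ : C → ℝ)
    (hd : ∀ e, d e ≠ 0) (hA : ∀ i, A i ≠ 0) :
    ∑ e, u e * (-(1 / d e) * ∑ i, ψ i * n e i) * (1 / 2 * d e * l e) =
      -(1 / 2) * ∑ i, (1 / A i * ∑ e, u e * l e * n e i) * ψ i * A i := by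
  simp_rw [Finset.mul_sum, Finset.sum_mul]
  rw [Finset.sum_comm]
  apply Finset.sum_congr rfl
  intro i _
  rw [Finset.mul_sum]
  apply Finset.sum_congr rfl
  intro e _
  field_simp [hd e, hA i]
end

section
/- Conservation of the potential enstrophy by the continuous pure transport dynamics on a rectangle: let M = [a₁,b₁] × [a₂,b₂] ⊂ ℝ² be a nondegenerate closed rectangle, and let u = (u₁,u₂) : ℝ² → ℝ² be continuously differentiable on a neighborhood of M with ∂₁u₁ + ∂₂u₂ = 0 on M, with u₁ = 0 on the two faces where x₁ ∈ {a₁,b₁} and u₂ = 0 on the two faces where x₂ ∈ {a₂,b₂}. Let q : ℝ × ℝ² → ℝ be continuously differentiable on ℝ × (a neighborhood of M) and satisfy the transport equation ∂_t q(t,x) + u(x)·∇_x q(t,x) = 0 for all t ∈ ℝ and x ∈ M. Then the potential enstrophy t ↦ ∫_M q(t,x)² dx is constant in t. -/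
open MeasureTheory

/-- Time partial derivative of `q : ℝ × (ℝ × ℝ) → ℝ`. -/
noncomputable def pdt (q : ℝ × (ℝ × ℝ) → ℝ) (p : ℝ × (ℝ × ℝ)) : ℝ :=
  fderiv ℝ q p (1, (0, 0))

/-- Spatial partial derivative of `q : ℝ × (ℝ × ℝ) → ℝ` in the first space
direction. -/
noncomputable def pdx1 (q : ℝ × (ℝ × ℝ) → ℝ) (p : ℝ × (ℝ × ℝ)) : ℝ :=
  fderiv ℝ q p (0, (1, 0))

/-- Spatial partial derivative of `q : ℝ × (ℝ × ℝ) → ℝ` in the second space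
direction. -/
noncomputable def pdx2 (q : ℝ × (ℝ × ℝ) → ℝ) (p : ℝ × (ℝ × ℝ)) : ℝ :=
  fderiv ℝ q p (0, (0, 1))

/-- Conservation of the potential enstrophy by the continuous pure transport
dynamics on a rectangle: if `u` is divergence free on the rectangle `M`, `C¹`
near `M`, satisfies the no-flux boundary condition on `∂M`, and `q` solves the
transport equation `∂_t q + u·∇_x q = 0` on `ℝ × M`, then the potential
enstrophy `t ↦ ∫_M q(t,x)² dx` is constant in time. -/
theorem potential_enstrophy_conserved_continuous_transport
    (a₁ b₁ a₂ b₂ : ℝ) (h1 : a₁ < b₁) (h2 : a₂ < b₂)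
    (M : Set (ℝ × ℝ)) (hM : M = Set.Icc a₁ b₁ ×ˢ Set.Icc a₂ b₂)
    (u : ℝ × ℝ → ℝ × ℝ)
    (hu : ∃ U : Set (ℝ × ℝ), IsOpen U ∧ M ⊆ U ∧ ContDiffOn ℝ 1 u U)
    (hdiv : ∀ x ∈ M,
      fderiv ℝ (fun y => (u y).1) x (1, 0) + fderiv ℝ (fun y => (u y).2) x (0, 1) = 0)
    (hbc1 : ∀ x ∈ M, (x.1 = a₁ ∨ x.1 = b₁) → (u x).1 = 0)
    (hbc2 : ∀ x ∈ M, (x.2 = a₂ ∨ x.2 = b₂) → (u x).2 = 0)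
    (q : ℝ × (ℝ × ℝ) → ℝ)
    (hq : ∃ U : Set (ℝ × ℝ), IsOpen U ∧ M ⊆ U ∧
      ContDiffOn ℝ 1 q (Set.univ ×ˢ U))
    (htransport : ∀ t : ℝ, ∀ x ∈ M,
      pdt q (t, x) + (u x).1 * pdx1 q (t, x) + (u x).2 * pdx2 q (t, x) = 0) :
    ∀ t₁ t₂ : ℝ, (∫ x in M, q (t₁, x) ^ 2) = ∫ x in M, q (t₂, x) ^ 2 := by
  classical
  obtain ⟨Uu, hUuo, hMUu, huCu⟩ := hu
  obtain ⟨Uq, hUqo, hMUq, hqCq⟩ := hq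
  set U : Set (ℝ × ℝ) := Uu ∩ Uq with hUdef
  have hUo : IsOpen U := hUuo.inter hUqo
  have hMU : M ⊆ U := Set.subset_inter hMUu hMUq
  have huC : ContDiffOn ℝ 1 u U := huCu.mono Set.inter_subset_left
  have hqC : ContDiffOn ℝ 1 q (Set.univ ×ˢ U) :=
    hqCq.mono (Set.prod_mono_right Set.inter_subset_right)
  have hUQo : IsOpen ((Set.univ : Set ℝ) ×ˢ U) := isOpen_univ.prod hUo
  -- basic facts about M
  have hMmeas : MeasurableSet M := by
    rw [hM]; exact measurableSet_Icc.prod measurableSet_Icc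
  have hMcomp : IsCompact M := by
    rw [hM]; exact isCompact_Icc.prod isCompact_Icc
  have hMIcc : M = Set.Icc (a₁, a₂) (b₁, b₂) := by
    rw [hM, Set.Icc_prod_Icc]
  -- differentiability facts
  have hqd : ∀ p : ℝ × (ℝ × ℝ), p.2 ∈ U → HasFDerivAt q (fderiv ℝ q p) p := by
    intro p hp
    have hpmem : p ∈ (Set.univ : Set ℝ) ×ˢ U := ⟨Set.mem_univ _, hp⟩
    exact ((hqC.contDiffAt (hUQo.mem_nhds hpmem)).differentiableAt one_ne_zero).hasFDerivAt
  have hud : ∀ x ∈ U, HasFDerivAt u (fderiv ℝ u x) x := by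
    intro x hx
    exact ((huC.contDiffAt (hUo.mem_nhds hx)).differentiableAt one_ne_zero).hasFDerivAt
  -- continuity facts
  have hqcont : ContinuousOn q ((Set.univ : Set ℝ) ×ˢ U) := hqC.continuousOn
  have hfdqcont : ContinuousOn (fderiv ℝ q) ((Set.univ : Set ℝ) ×ˢ U) :=
    hqC.continuousOn_fderiv_of_isOpen hUQo le_rfl
  have hucont : ContinuousOn u U := huC.continuousOn
  have hfducont : ContinuousOn (fderiv ℝ u) U :=
    huC.continuousOn_fderiv_of_isOpen hUo le_rfl
  -- the time derivative of q(·, x)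
  have hqt : ∀ (t : ℝ) (x : ℝ × ℝ), x ∈ U →
      HasDerivAt (fun s => q (s, x)) (pdt q (t, x)) t := by
    intro t x hx
    have h1 : HasDerivAt (fun s : ℝ => (s, x)) ((1 : ℝ), (0 : ℝ × ℝ)) t := by
      simpa using (hasFDerivAt_prodMk_left (𝕜 := ℝ) t x).hasDerivAt
    have := (hqd (t, x) hx).comp_hasDerivAt t h1
    exact this
  -- the spatial derivative of q(t, ·)
  have hqx : ∀ (t : ℝ) (x : ℝ × ℝ), x ∈ U →
      HasFDerivAt (fun y => q (t, y))
        ((fderiv ℝ q (t, x)).comp (ContinuousLinearMap.inr ℝ ℝ (ℝ × ℝ))) x := by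
    intro t x hx
    exact (hqd (t, x) hx).comp x (hasFDerivAt_prodMk_right (𝕜 := ℝ) t x)
  have hmapsto0 : ∀ t : ℝ, Set.MapsTo (fun x : ℝ × ℝ => (t, x)) U
      ((Set.univ : Set ℝ) ×ˢ U) := fun t x hx => ⟨Set.mem_univ _, hx⟩
  have hqsliceU : ∀ t : ℝ, ContinuousOn (fun x : ℝ × ℝ => q (t, x)) U := by
    intro t
    exact hqcont.comp ((continuous_const.prodMk continuous_id).continuousOn) (hmapsto0 t)
  -- Step B : the divergence theorem argument
  have keyC0 : ∀ t : ℝ, (∫ x in M, 2 * q (t, x) * pdt q (t, x)) = 0 := by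
    intro t
    set J : (ℝ × ℝ) →L[ℝ] ℝ × (ℝ × ℝ) := ContinuousLinearMap.inr ℝ ℝ (ℝ × ℝ) with hJ
    set B : (ℝ × ℝ) → ((ℝ × ℝ) →L[ℝ] ℝ) := fun x => (fderiv ℝ q (t, x)).comp J with hBdef
    set f : ℝ × ℝ → ℝ := fun x => (u x).1 * q (t, x) ^ 2 with hfdef
    set g : ℝ × ℝ → ℝ := fun x => (u x).2 * q (t, x) ^ 2 with hgdef
    set f' : ℝ × ℝ → ((ℝ × ℝ) →L[ℝ] ℝ) := fun x =>
      (u x).1 • (q (t, x) • B x + q (t, x) • B x) +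
        (q (t, x) * q (t, x)) • ((ContinuousLinearMap.fst ℝ ℝ ℝ).comp (fderiv ℝ u x))
      with hf'def
    set g' : ℝ × ℝ → ((ℝ × ℝ) →L[ℝ] ℝ) := fun x =>
      (u x).2 • (q (t, x) • B x + q (t, x) • B x) +
        (q (t, x) * q (t, x)) • ((ContinuousLinearMap.snd ℝ ℝ ℝ).comp (fderiv ℝ u x))
      with hg'def
    -- derivative facts on U
    have hq2d : ∀ x ∈ U, HasFDerivAt (fun y => q (t, y) ^ 2)
        (q (t, x) • B x + q (t, x) • B x) x := by
      intro x hx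
      have := (hqx t x hx).mul (hqx t x hx)
      simpa [pow_two, Pi.mul_def] using this
    have hfd : ∀ x ∈ U, HasFDerivAt f (f' x) x := by
      intro x hx
      have h1 := (hud x hx).fst
      have := h1.mul (hq2d x hx)
      simpa [hfdef, hf'def, pow_two, mul_comm, Pi.mul_def] using this
    have hgd : ∀ x ∈ U, HasFDerivAt g (g' x) x := by
      intro x hx
      have h1 := (hud x hx).snd
      have := h1.mul (hq2d x hx)
      simpa [hgdef, hg'def, pow_two, mul_comm, Pi.mul_def] using this
    -- the divergence equals -(2 q ∂ₜ q) on M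
    have hdiveq : ∀ x ∈ M, f' x (1, 0) + g' x (0, 1)
        = -(2 * q (t, x) * pdt q (t, x)) := by
      intro x hx
      have hxU : x ∈ U := hMU hx
      have hd1 : fderiv ℝ (fun y => (u y).1) x
          = (ContinuousLinearMap.fst ℝ ℝ ℝ).comp (fderiv ℝ u x) := ((hud x hxU).fst).fderiv
      have hd2 : fderiv ℝ (fun y => (u y).2) x
          = (ContinuousLinearMap.snd ℝ ℝ ℝ).comp (fderiv ℝ u x) := ((hud x hxU).snd).fderiv
      have hdiv' := hdiv x hx
      rw [hd1, hd2] at hdiv'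
      simp only [ContinuousLinearMap.comp_apply, ContinuousLinearMap.coe_fst',
        ContinuousLinearMap.coe_snd'] at hdiv'
      have htr := htransport t x hx
      have hB1 : B x (1, 0) = pdx1 q (t, x) := by
        simp [hBdef, hJ, pdx1]
      have hB2 : B x (0, 1) = pdx2 q (t, x) := by
        simp [hBdef, hJ, pdx2]
      simp only [hf'def, hg'def, ContinuousLinearMap.add_apply,
        ContinuousLinearMap.smul_apply, ContinuousLinearMap.comp_apply,
        ContinuousLinearMap.coe_fst', ContinuousLinearMap.coe_snd', smul_eq_mul,
        hB1, hB2]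
      linear_combination (q (t, x)) * (q (t, x)) * hdiv' + 2 * q (t, x) * htr
    -- continuity of f, g, and of the divergence on U
    have hfcont : ContinuousOn f U :=
      ((continuous_fst.comp_continuousOn hucont)).mul ((hqsliceU t).pow 2)
    have hgcont : ContinuousOn g U :=
      ((continuous_snd.comp_continuousOn hucont)).mul ((hqsliceU t).pow 2)
    have hBcont : ContinuousOn B U := by
      apply ContinuousOn.clm_comp _ continuousOn_const
      exact hfdqcont.comp ((continuous_const.prodMk continuous_id).continuousOn) (hmapsto0 t)
    have hf'cont : ContinuousOn f' U := by
      apply ContinuousOn.add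
      · exact (continuous_fst.comp_continuousOn hucont).smul
          (((hqsliceU t).smul hBcont).add ((hqsliceU t).smul hBcont))
      · exact ((hqsliceU t).mul (hqsliceU t)).smul
          (ContinuousOn.clm_comp continuousOn_const hfducont)
    have hg'cont : ContinuousOn g' U := by
      apply ContinuousOn.add
      · exact (continuous_snd.comp_continuousOn hucont).smul
          (((hqsliceU t).smul hBcont).add ((hqsliceU t).smul hBcont))
      · exact ((hqsliceU t).mul (hqsliceU t)).smul
          (ContinuousOn.clm_comp continuousOn_const hfducont)
    -- apply the divergence theorem
    have hdivthm := integral_divergence_prod_Icc_of_hasFDerivAt_off_countable_of_le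
      f g f' g' (a₁, a₂) (b₁, b₂) ⟨h1.le, h2.le⟩ ∅ Set.countable_empty
      (by rw [← hMIcc]; exact hfcont.mono hMU)
      (by rw [← hMIcc]; exact hgcont.mono hMU)
      (by
        intro x hx
        refine hfd x (hMU ?_)
        rw [hM]
        exact ⟨Set.Ioo_subset_Icc_self hx.1.1, Set.Ioo_subset_Icc_self hx.1.2⟩)
      (by
        intro x hx
        refine hgd x (hMU ?_)
        rw [hM]
        exact ⟨Set.Ioo_subset_Icc_self hx.1.1, Set.Ioo_subset_Icc_self hx.1.2⟩)
      (by
        rw [← hMIcc]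
        apply ContinuousOn.integrableOn_compact hMcomp
        exact ((hf'cont.clm_apply continuousOn_const).add
          (hg'cont.clm_apply continuousOn_const)).mono hMU)
    -- the boundary terms vanish
    have hz1 : (∫ x in a₁..b₁, g (x, b₂)) = 0 := by
      rw [intervalIntegral.integral_congr (g := fun _ => (0 : ℝ)) ?_,
        intervalIntegral.integral_zero]
      intro x hx
      rw [Set.uIcc_of_le h1.le] at hx
      have hxM : ((x : ℝ), b₂) ∈ M := by
        rw [hM]; exact ⟨hx, Set.right_mem_Icc.2 h2.le⟩
      simp [hgdef, hbc2 _ hxM (Or.inr rfl)]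
    have hz2 : (∫ x in a₁..b₁, g (x, a₂)) = 0 := by
      rw [intervalIntegral.integral_congr (g := fun _ => (0 : ℝ)) ?_,
        intervalIntegral.integral_zero]
      intro x hx
      rw [Set.uIcc_of_le h1.le] at hx
      have hxM : ((x : ℝ), a₂) ∈ M := by
        rw [hM]; exact ⟨hx, Set.left_mem_Icc.2 h2.le⟩
      simp [hgdef, hbc2 _ hxM (Or.inl rfl)]
    have hz3 : (∫ y in a₂..b₂, f (b₁, y)) = 0 := by
      rw [intervalIntegral.integral_congr (g := fun _ => (0 : ℝ)) ?_,
        intervalIntegral.integral_zero]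
      intro y hy
      rw [Set.uIcc_of_le h2.le] at hy
      have hxM : (b₁, (y : ℝ)) ∈ M := by
        rw [hM]; exact ⟨Set.right_mem_Icc.2 h1.le, hy⟩
      simp [hfdef, hbc1 _ hxM (Or.inr rfl)]
    have hz4 : (∫ y in a₂..b₂, f (a₁, y)) = 0 := by
      rw [intervalIntegral.integral_congr (g := fun _ => (0 : ℝ)) ?_,
        intervalIntegral.integral_zero]
      intro y hy
      rw [Set.uIcc_of_le h2.le] at hy
      have hxM : (a₁, (y : ℝ)) ∈ M := by
        rw [hM]; exact ⟨Set.left_mem_Icc.2 h1.le, hy⟩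
      simp [hfdef, hbc1 _ hxM (Or.inl rfl)]
    rw [hz1, hz2, hz3, hz4] at hdivthm
    simp only [sub_zero, add_zero, sub_self, zero_add] at hdivthm
    -- conclude
    have hfinal : (∫ x in M, 2 * q (t, x) * pdt q (t, x))
        = -∫ x in M, (f' x (1, 0) + g' x (0, 1)) := by
      rw [← integral_neg]
      apply setIntegral_congr_fun hMmeas
      intro x hx
      dsimp only
      rw [hdiveq x hx]
      ring
    rw [hfinal, hMIcc, hdivthm, neg_zero]
  -- Step C : differentiation under the integral sign
  have keyC : ∀ t₀ : ℝ, HasDerivAt (fun t => ∫ x in M, q (t, x) ^ 2) 0 t₀ := by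
    intro t₀
    -- continuity of the integrand and of its time derivative
    have hmapsto : ∀ t : ℝ, Set.MapsTo (fun x : ℝ × ℝ => (t, x)) M
        ((Set.univ : Set ℝ) ×ˢ U) := fun t x hx => ⟨Set.mem_univ _, hMU hx⟩
    have hqslice : ∀ t : ℝ, ContinuousOn (fun x : ℝ × ℝ => q (t, x)) M := by
      intro t
      exact hqcont.comp ((continuous_const.prodMk continuous_id).continuousOn) (hmapsto t)
    have hpdtcont : ContinuousOn (fun p : ℝ × (ℝ × ℝ) => 2 * q p * pdt q p)
        ((Set.univ : Set ℝ) ×ˢ U) := by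
      apply ((continuousOn_const.mul hqcont).mul _)
      exact hfdqcont.clm_apply continuousOn_const
    -- a uniform bound on the compact set (Icc (t₀-1) (t₀+1)) ×ˢ M
    obtain ⟨C, hC⟩ : ∃ C, ∀ p ∈ (Set.Icc (t₀ - 1) (t₀ + 1)) ×ˢ M,
        ‖2 * q p * pdt q p‖ ≤ C := by
      apply IsCompact.exists_bound_of_continuousOn (isCompact_Icc.prod hMcomp)
      exact hpdtcont.mono (Set.prod_mono (Set.subset_univ _) hMU)
    have hderiv := hasDerivAt_integral_of_dominated_loc_of_deriv_le
      (F := fun t x => q (t, x) ^ 2) (F' := fun t x => 2 * q (t, x) * pdt q (t, x))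
      (μ := volume.restrict M) (x₀ := t₀) (bound := fun _ => C) (Metric.ball_mem_nhds t₀ one_pos)
      ?_ ?_ ?_ ?_ ?_ ?_
    · have := hderiv.2
      rw [keyC0 t₀] at this
      exact this
    · filter_upwards with t
      exact ((hqslice t).pow 2).aestronglyMeasurable hMmeas
    · exact (((hqslice t₀).pow 2).integrableOn_compact hMcomp)
    · apply ContinuousOn.aestronglyMeasurable _ hMmeas
      exact (hpdtcont.comp ((continuous_const.prodMk continuous_id).continuousOn) (hmapsto t₀))
    · refine (ae_restrict_mem hMmeas).mono fun x hx => ?_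
      intro s hs
      refine hC (s, x) ⟨?_, hx⟩
      have := Real.ball_eq_Ioo t₀ 1 ▸ hs
      exact ⟨by linarith [this.1], by linarith [this.2]⟩
    · exact integrableOn_const hMcomp.measure_lt_top.ne
    · refine (ae_restrict_mem hMmeas).mono fun x hx => ?_
      intro s _
      have h := ((hqt s x (hMU hx)).pow 2)
      simpa [pow_one, Pi.pow_def] using h
  -- Step D : conclude
  intro t₁ t₂
  exact is_const_of_deriv_eq_zero (fun t => (keyC t).differentiableAt)
    (fun t => (keyC t).deriv) t₁ t₂
end

section
/- Averaged-advection form of the discrete potential-vorticity flux divergence: fix a cell i and let EC(i) be the finite set of its edges. Assume each edge e ∈ EC(i) has d_e ≠ 0 and a real weight l_e, is shared with exactly one other cell c(e), and carries direction indicators n_{e,i} ∈ {1,−1} and n_{e,c(e)} = −n_{e,i}. Given cell values (q_j) and edge normal velocities (u_e), set q̂_e = (q_i + q_{c(e)})/2, [∇_h q]_e = −(1/d_e)(q_i n_{e,i} + q_{c(e)} n_{e,c(e)}), and A_e = (1/2) d_e l_e. If the discrete divergence-free condition Σ_{e∈EC(i)} u_e l_e n_{e,i} = 0 holds, then Σ_{e∈EC(i)}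 q̂_e u_e l_e n_{e,i} = Σ_{e∈EC(i)} A_e [∇_h q]_e u_e. In particular, under the semi-discrete pure transport scheme dq_i/dt + (1/A_i) Σ_{e∈EC(i)} q̂_e u_e l_e n_{e,i} = 0 with A_i ≠ 0, the potential vorticity on cell i evolves by dq_i/dt + Σ_{e∈EC(i)} (A_e/A_i)[∇_h q]_e u_e = 0, a weighted combination of the discrete advection terms [∇_h q]_e u_e across the edges of cell i. -/
open Finset

/-- Averaged-advection form of the discrete potential-vorticity flux
divergence around a fixed cell `i`: if the discrete velocity is divergence
free on cell `i`, then `Σ_e q̂_e u_e l_e n_{e,i} = Σ_e A_e [∇_h q]_e u_e`, and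
consequently the semi-discrete pure transport scheme
`dq_i/dt + (1/A_i) Σ_e q̂_e u_e l_e n_{e,i} = 0` takes the averaged-advection
form `dq_i/dt + Σ_e (A_e/A_i) [∇_h q]_e u_e = 0`. -/
theorem averaged_advection_form_of_pv_flux_divergence
    {E : Type*} [Fintype E]
    (d l u : E → ℝ) (ni : E → ℝ) (qi : ℝ) (qc : E → ℝ) (Ai : ℝ)
    (hd : ∀ e, d e ≠ 0)
    (hn : ∀ e, ni e = 1 ∨ ni e = -1)
    (hAi : Ai ≠ 0)
    (qhat grad Ae : E → ℝ)
    (hqhat : ∀ e, qhat e = (qi + qc e) / 2)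
    (hgrad : ∀ e, grad e = -(1 / d e) * (qi * ni e + qc e * (-ni e)))
    (hAe : ∀ e, Ae e = 1 / 2 * d e * l e)
    (hdiv : ∑ e, u e * l e * ni e = 0) :
    (∑ e, qhat e * u e * l e * ni e = ∑ e, Ae e * grad e * u e) ∧
      (∀ dqidt : ℝ,
        dqidt + 1 / Ai * ∑ e, qhat e * u e * l e * ni e = 0 →
          dqidt + ∑ e, Ae e / Ai * grad e * u e = 0) := by
  have key : ∑ e, qhat e * u e * l e * ni e = ∑ e, Ae e * grad e * u e := by
    have h1 : ∀ e, qhat e * u e * l e * ni e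
        = Ae e * grad e * u e + qi * (u e * l e * ni e) := by
      intro e
      rw [hqhat, hgrad, hAe]
      linear_combination (qi - qc e) / 2 * u e * l e * ni e * mul_inv_cancel₀ (hd e)
    calc ∑ e, qhat e * u e * l e * ni e
        = ∑ e, (Ae e * grad e * u e + qi * (u e * l e * ni e)) := by
          exact Finset.sum_congr rfl fun e _ => h1 e
      _ = (∑ e, Ae e * grad e * u e) + qi * ∑ e, u e * l e * ni e := by
          rw [Finset.sum_add_distrib, ← Finset.mul_sum]
      _ = ∑ e, Ae e * grad e * u e := by rw [hdiv]; ring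
  refine ⟨key, fun dqidt h => ?_⟩
  have h2 : ∑ e, Ae e / Ai * grad e * u e
      = 1 / Ai * ∑ e, Ae e * grad e * u e := by
    rw [Finset.mul_sum]
    exact Finset.sum_congr rfl fun e _ => by ring
  rw [h2, ← key]
  exact h
end

section
/- Conservation of the discrete potential enstrophy by the semi-discrete finite volume transport scheme: let C and E be finite sets (cells and edges). Assume each edge e has two distinct incident cells σ(e) ≠ τ(e), weights d_e, l_e ∈ ℝ, and direction indicators n_{e,σ(e)} = 1, n_{e,τ(e)} = −1, and n_{e,i} = 0 for all other cells i; each cell i has area A_i ≠ 0. Let u : E → ℝ be a discrete normal velocity field satisfying the per-cell discrete divergence-free condition Σ_{e∈E} u_e l_e n_{e,i} = 0 for every cell i ∈ C. Suppose q : ℝ → C → ℝ has each component differentiable and satisfies, for all t and all i ∈ C, q_i'(t) = −(1/A_i) Σ_{e∈E} q̂_e(t) u_e l_e n_{e,i}, where q̂_e(t) = (q_{σ(e)}(t) + q_{τ(e)}(t))/2. Then the discrete potential enstrophy t ↦ Σ_{i∈C} A_i q_i(t)² is constant in t. -/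
open Finset

/-- Conservation of the discrete potential enstrophy by the semi-discrete
finite volume transport scheme: each edge `e` is shared by exactly two
distinct cells `σ e` and `τ e` with opposite direction indicators, the
discrete velocity `u` is divergence free on every cell, and the cell values
evolve by `q_i' = -(1/A_i) Σ_e q̂_e u_e l_e n_{e,i}` with arithmetic-mean edge
values `q̂_e = (q_{σ e} + q_{τ e})/2`; then the discrete potential enstrophy
`Σ_i A_i q_i²` is constant in time. -/
theorem discrete_potential_enstrophy_conserved
    {C E : Type*} [Fintype C] [Fintype E]
    (σ τ : E → C) (hστ : ∀ e, σ e ≠ τ e)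
    (d l : E → ℝ) (n : E → C → ℝ)
    (hnσ : ∀ e, n e (σ e) = 1) (hnτ : ∀ e, n e (τ e) = -1)
    (hn0 : ∀ e, ∀ i, i ≠ σ e → i ≠ τ e → n e i = 0)
    (A : C → ℝ) (hA : ∀ i, A i ≠ 0)
    (u : E → ℝ) (hdiv : ∀ i, ∑ e, u e * l e * n e i = 0)
    (q : ℝ → C → ℝ)
    (hq : ∀ i, ∀ t : ℝ,
      HasDerivAt (fun s => q s i)
        (-(1 / A i) * ∑ e, (q t (σ e) + q t (τ e)) / 2 * u e * l e * n e i) t) :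
    ∀ t₁ t₂ : ℝ, ∑ i, A i * q t₁ i ^ 2 = ∑ i, A i * q t₂ i ^ 2 := by
  classical
  -- key summation identity: summing `n e i * f i` over cells picks out σ and τ
  have key : ∀ (e : E) (f : C → ℝ), ∑ i, n e i * f i = f (σ e) - f (τ e) := by
    intro e f
    have hcong : ∀ i ∈ Finset.univ, n e i * f i =
        (if σ e = i then f i else 0) + (if τ e = i then -f i else 0) := by
      intro i _
      by_cases h1 : i = σ e
      · subst h1
        simp [hnσ e, (Ne.symm (hστ e))]
      · by_cases h2 : i = τ e
        · subst h2
          simp [hnτ e, hστ e, Ne.symm h1]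
        · simp [hn0 e i h1 h2, Ne.symm h1, Ne.symm h2]
    rw [Finset.sum_congr rfl hcong, Finset.sum_add_distrib,
        Finset.sum_ite_eq, Finset.sum_ite_eq]
    simp [sub_eq_add_neg]
  have hderiv : ∀ t, HasDerivAt (fun s => ∑ i, A i * q s i ^ 2) 0 t := by
    intro t
    have h1 : HasDerivAt (fun s => ∑ i, A i * q s i ^ 2)
        (∑ i, A i * ((2 : ℕ) * q t i ^ 1 *
          (-(1 / A i) * ∑ e, (q t (σ e) + q t (τ e)) / 2 * u e * l e * n e i))) t := by
      apply HasDerivAt.fun_sum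
      intro i _
      exact ((hq i t).pow 2).const_mul (A i)
    have hval : (∑ i, A i * ((2 : ℕ) * q t i ^ 1 *
        (-(1 / A i) * ∑ e, (q t (σ e) + q t (τ e)) / 2 * u e * l e * n e i))) = 0 := by
      have step1 : ∀ i, A i * ((2 : ℕ) * q t i ^ 1 *
          (-(1 / A i) * ∑ e, (q t (σ e) + q t (τ e)) / 2 * u e * l e * n e i))
          = ∑ e, -(u e * l e * ((q t (σ e) + q t (τ e)) * (n e i * q t i))) := by
        intro i
        have hAi := hA i
        rw [Finset.mul_sum, Finset.mul_sum, Finset.mul_sum]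
        apply Finset.sum_congr rfl
        intro e _
        field_simp
        ring
      rw [Finset.sum_congr rfl fun i _ => step1 i, Finset.sum_comm]
      have step2 : ∀ e, (∑ i, -(u e * l e * ((q t (σ e) + q t (τ e)) * (n e i * q t i))))
          = -(u e * l e * (q t (σ e) ^ 2 - q t (τ e) ^ 2)) := by
        intro e
        have h : ∑ i, -(u e * l e * ((q t (σ e) + q t (τ e)) * (n e i * q t i)))
            = (-(u e * l e * (q t (σ e) + q t (τ e)))) * ∑ i, n e i * q t i := by
          rw [Finset.mul_sum]
          exact Finset.sum_congr rfl fun i _ => by ring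
        rw [h, key e (q t)]
        ring
      rw [Finset.sum_congr rfl fun e _ => step2 e]
      have step3 : ∀ e, -(u e * l e * (q t (σ e) ^ 2 - q t (τ e) ^ 2))
          = ∑ i, -(u e * l e * n e i * q t i ^ 2) := by
        intro e
        have h : ∑ i, -(u e * l e * n e i * q t i ^ 2)
            = (-(u e * l e)) * ∑ i, n e i * q t i ^ 2 := by
          rw [Finset.mul_sum]
          exact Finset.sum_congr rfl fun i _ => by ring
        rw [h, key e (fun i => q t i ^ 2)]
        ring
      rw [Finset.sum_congr rfl fun e _ => step3 e, Finset.sum_comm]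
      apply Finset.sum_eq_zero
      intro i _
      have h : ∑ e, -(u e * l e * n e i * q t i ^ 2)
          = (∑ e, u e * l e * n e i) * (-(q t i ^ 2)) := by
        rw [Finset.sum_mul]
        exact Finset.sum_congr rfl fun e _ => by ring
      rw [h, hdiv i]
      ring
    rw [hval] at h1
    exact h1
  intro t₁ t₂
  exact is_const_of_deriv_eq_zero (fun t => (hderiv t).differentiableAt)
    (fun t => (hderiv t).deriv) t₁ t₂
end
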